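/- arXiv:math/0007012 — 5 statements merged into one kernel-verified Lean document; each statement's English description precedes it below -/
import Mathlib

section
/- If w₁ and w₂ are complex numbers with Re w₁ = Re w₂ and |Im w₁| ≤ Im w₂, then for every complex z with Im z ≥ 0, one has |1 - z·w₁| ≤ |1 - z·w₂|. -/
theorem scalar_livsic (w₁ w₂ : ℂ) (hre : w₁.re = w₂.re)
    (him : |w₁.im| ≤ w₂.im) (z : ℂ) (hz : 0 ≤ z.im) :
    ‖1 - z * w₁‖ ≤ ‖1 - z * w₂‖ := by
  obtain ⟨h1, h2⟩ := abs_le.mp him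
  have h3 : (0:ℝ) ≤ w₂.im - w₁.im := by linarith
  have h4 : (0:ℝ) ≤ w₂.im + w₁.im := by linarith
  rw [Complex.norm_def, Complex.norm_def]
  apply Real.sqrt_le_sqrt
  simp only [Complex.normSq_apply, Complex.sub_re, Complex.sub_im, Complex.one_re,
    Complex.one_im, Complex.mul_re, Complex.mul_im, hre]
  nlinarith [mul_nonneg hz h3,
    mul_nonneg (mul_nonneg (add_nonneg (mul_self_nonneg z.re) (mul_self_nonneg z.im)) h3) h4]
end

section
/- For 1 < p < 2 there exists a constant K_p > 0 such that for all φ with |φ| ≤ π/2, cos(p·φ) ≤ K_p · (cos φ)^p. -/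
open Real

theorem cos_p_mul_le (p : ℝ) (hp1 : 1 < p) (hp2 : p < 2) :
    ∃ K : ℝ, 0 < K ∧ ∀ φ : ℝ, |φ| ≤ π / 2 →
      Real.cos (p * φ) ≤ K * (Real.cos φ) ^ p := by
  have hp0 : 0 < p := by linarith
  have hpi : 0 < π := Real.pi_pos
  have hquot : 0 < π / (2 * p) := by positivity
  have hquot2 : π / (2 * p) < π / 2 := by
    apply div_lt_div_of_pos_left hpi (by linarith) (by linarith)
  set c : ℝ := Real.cos (π / (2 * p)) with hc_def
  have hc : 0 < c := Real.cos_pos_of_mem_Ioo ⟨by linarith, by linarith⟩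
  have hcp : 0 < c ^ p := Real.rpow_pos_of_pos hc p
  refine ⟨1 / c ^ p, by positivity, fun φ hφ => ?_⟩
  have hcosφ : 0 ≤ Real.cos φ :=
    Real.cos_nonneg_of_mem_Icc ⟨by cases abs_le.mp hφ; linarith, (abs_le.mp hφ).2⟩
  by_cases h : |φ| ≤ π / (2 * p)
  · -- cos φ ≥ c > 0
    have h1 : c ≤ Real.cos φ := by
      rw [← Real.cos_abs φ]
      exact Real.cos_le_cos_of_nonneg_of_le_pi (abs_nonneg φ) (by linarith) h
    have h2 : c ^ p ≤ (Real.cos φ) ^ p := Real.rpow_le_rpow hc.le h1 hp0.le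
    have h3 : (1 : ℝ) ≤ 1 / c ^ p * (Real.cos φ) ^ p := by
      rw [div_mul_eq_mul_div, one_mul, le_div_iff₀ hcp, one_mul]
      exact h2
    exact le_trans (Real.cos_le_one _) h3
  · -- cos (p φ) ≤ 0 ≤ RHS
    push_neg at h
    have h1 : Real.cos (p * φ) ≤ 0 := by
      rw [← Real.cos_abs, abs_mul, abs_of_pos hp0]
      apply Real.cos_nonpos_of_pi_div_two_le_of_le
      · rw [← div_le_iff₀' hp0]
        calc π / 2 / p = π / (2 * p) := by ring
        _ ≤ |φ| := h.le
      · calc p * |φ| ≤ p * (π / 2) := by nlinarith [abs_nonneg φ]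
          _ ≤ π + π / 2 := by nlinarith
    have h2 : 0 ≤ 1 / c ^ p * (Real.cos φ) ^ p := by positivity
    linarith
end

section
/- For 1 < p < 2, 0 ≤ θ ≤ π, ρ > 0, and ε > 0, one has ∫₀^∞ (log|1 - s·e^{-2iθ}| / s^{p/2+1}) · e^{-ε s ρ²} ds ≤ e^{-2ε ρ² (cos 2θ)⁺} · ∫₀^∞ log|1 - s·e^{-2iθ}| / s^{p/2+1} ds, where (x)⁺ = max(x,0). -/
open MeasureTheory Real Complex Set

lemma aux_sq_abs (θ s : ℝ) :
    (‖1 - (s:ℂ) * Complex.exp (-2 * θ * Complex.I)‖) ^ 2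
      = 1 - 2 * s * Real.cos (2*θ) + s ^ 2 := by
  rw [Complex.sq_norm, Complex.normSq_apply]
  have h : (-2 * (θ:ℂ) * Complex.I) = ((-2*θ : ℝ):ℂ) * Complex.I := by push_cast; ring
  rw [h, Complex.exp_mul_I]
  simp only [Complex.sub_re, Complex.sub_im, Complex.one_re, Complex.one_im, Complex.mul_re,
    Complex.mul_im, Complex.ofReal_re, Complex.ofReal_im, Complex.add_re, Complex.add_im,
    Complex.cos_ofReal_re, Complex.cos_ofReal_im, Complex.sin_ofReal_re, Complex.sin_ofReal_im,
    Complex.I_re, Complex.I_im]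
  have h2 : Real.cos (-2*θ) = Real.cos (2*θ) := by rw [show (-2*θ) = -(2*θ) by ring, Real.cos_neg]
  have h3 := Real.sin_sq_add_cos_sq (-2*θ)
  linear_combination (s^2) * h3 + (-2*s) * h2

lemma aux_abs_bounds (θ s : ℝ) (hs : 0 ≤ s) :
    |1 - s| ≤ ‖1 - (s:ℂ) * Complex.exp (-2 * θ * Complex.I)‖ ∧
    ‖1 - (s:ℂ) * Complex.exp (-2 * θ * Complex.I)‖ ≤ 1 + s := by
  have he : ‖Complex.exp (-2 * θ * Complex.I)‖ = 1 := by
    rw [Complex.norm_exp]; simp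
  have h1 : ‖(s:ℂ) * Complex.exp (-2 * θ * Complex.I)‖ = s := by
    rw [norm_mul, he, mul_one, Complex.norm_real, Real.norm_eq_abs, _root_.abs_of_nonneg hs]
  constructor
  · have h := abs_norm_sub_norm_le (1 : ℂ) ((s:ℂ) * Complex.exp (-2 * θ * Complex.I))
    rw [h1] at h
    simpa using h
  · have h := norm_sub_le (1 : ℂ) ((s:ℂ) * Complex.exp (-2 * θ * Complex.I))
    rw [h1] at h
    simpa using h

lemma aux_half : Real.cos (-(2⁻¹:ℝ) * π) = 0 := by
  rw [show (-(2⁻¹:ℝ) * π : ℝ) = -(π/2) by ring, Real.cos_neg, Real.cos_pi_div_two]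

lemma aux_log_abs_bound {x : ℝ} (h0 : 0 < x) (h1 : x ≤ 1) :
    |Real.log x| ≤ 2 * x ^ (-(2⁻¹):ℝ) := by
  have heq : (x⁻¹ : ℝ) ^ ((2:ℝ)⁻¹) = x ^ (-(2⁻¹):ℝ) := by
    rw [← Real.rpow_neg_one x, ← Real.rpow_mul h0.le]; norm_num
  have h2 := Real.log_le_rpow_div (show (0:ℝ) ≤ x⁻¹ by positivity) (show (0:ℝ) < 2⁻¹ by norm_num)
  rw [Real.log_inv, heq] at h2
  have h3 : x ^ (-(2⁻¹):ℝ) / 2⁻¹ = 2 * x ^ (-(2⁻¹):ℝ) := by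
    rw [div_eq_mul_inv, inv_inv]; ring
  rw [abs_of_nonpos (Real.log_nonpos h0.le h1)]
  linarith

lemma aux_integrable (r θ : ℝ) (hr1 : (3:ℝ)/2 < r) (hr2 : r < 2) :
    IntegrableOn
      (fun s : ℝ => Real.log ‖1 - (s:ℂ) * Complex.exp (-2 * θ * Complex.I)‖
        / s ^ r) (Set.Ioi (0:ℝ)) := by
  have hr0 : (0:ℝ) ≤ r := by linarith
  set g : ℝ → ℝ := fun s => (Real.log (1 + s) + |Real.log (|1 - s|)|) / s ^ r with hg
  have hfmeas : Measurable (fun s : ℝ =>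
      Real.log ‖1 - (s:ℂ) * Complex.exp (-2 * θ * Complex.I)‖ / s ^ r) := by
    apply Measurable.div
    · exact Real.measurable_log.comp (continuous_norm.comp
        (continuous_const.sub (Complex.continuous_ofReal.mul continuous_const))).measurable
    · exact (Real.continuous_rpow_const hr0).measurable
  have hgmeas : Measurable g := by
    apply Measurable.div
    · exact (Real.measurable_log.comp (continuous_const.add continuous_id).measurable).add
        ((Real.measurable_log.comp (_root_.continuous_abs.comp
          (continuous_const.sub continuous_id)).measurable)).abs
    · exact (Real.continuous_rpow_const hr0).measurable
  have hg1 : IntegrableOn g (Ioc (0:ℝ) (1/2)) := by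
    have base : IntegrableOn (fun s : ℝ => 3 * s ^ (1 - r)) (Ioc (0:ℝ) (1/2)) := by
      have h := intervalIntegral.intervalIntegrable_rpow' (a := 0) (b := 1/2)
        (show (-1:ℝ) < 1 - r by linarith)
      rw [intervalIntegrable_iff_integrableOn_Ioc_of_le (by norm_num)] at h
      exact h.const_mul 3
    refine base.mono' hgmeas.aestronglyMeasurable ?_
    filter_upwards [ae_restrict_mem measurableSet_Ioc] with s hs
    obtain ⟨hs0, hs2⟩ := hs
    have hsr : (0:ℝ) < s ^ r := Real.rpow_pos_of_pos hs0 r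
    have hnum0 : 0 ≤ Real.log (1 + s) := Real.log_nonneg (by linarith)
    have hb1 : Real.log (1 + s) ≤ s := by
      have := Real.log_le_sub_one_of_pos (show (0:ℝ) < 1 + s by linarith); linarith
    have h1s : (0:ℝ) < 1 - s := by linarith
    have habs : |Real.log (|1 - s|)| = - Real.log (1 - s) := by
      rw [_root_.abs_of_pos h1s, abs_of_nonpos (Real.log_nonpos (by linarith) (by linarith))]
    have hb2 : - Real.log (1 - s) ≤ 2 * s := by
      have h := Real.log_le_sub_one_of_pos (show (0:ℝ) < (1 - s)⁻¹ by positivity)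
      rw [Real.log_inv] at h
      have h4 : (1 - s)⁻¹ - 1 = s / (1 - s) := by field_simp; ring
      rw [h4] at h
      have h5 : s / (1 - s) ≤ 2 * s := by rw [div_le_iff₀ h1s]; nlinarith
      linarith
    rw [Real.norm_eq_abs, hg, abs_div, _root_.abs_of_pos hsr,
      _root_.abs_of_nonneg (add_nonneg hnum0 (abs_nonneg _))]
    calc (Real.log (1 + s) + |Real.log (|1 - s|)|) / s ^ r ≤ 3 * s / s ^ r := by
          gcongr
          rw [habs]; linarith
      _ = 3 * s ^ (1 - r) := by rw [Real.rpow_sub hs0, Real.rpow_one, mul_div_assoc]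
  have hg2 : IntegrableOn g (Ioc (1/2:ℝ) 2) := by
    have i1 : IntegrableOn (fun s : ℝ => (s - 1) ^ (-(2⁻¹):ℝ)) (Ioc (1/2:ℝ) 2) := by
      have h := (intervalIntegral.intervalIntegrable_rpow' (a := -(1/2)) (b := 1)
        (show (-1:ℝ) < -(2⁻¹) by norm_num)).comp_sub_right 1
      rw [show (-(1/2) + 1 : ℝ) = 1/2 by norm_num, show ((1:ℝ) + 1 : ℝ) = 2 by norm_num,
        intervalIntegrable_iff_integrableOn_Ioc_of_le (by norm_num)] at h
      exact h
    have i2 : IntegrableOn (fun s : ℝ => (1 - s) ^ (-(2⁻¹):ℝ)) (Ioc (1/2:ℝ) 2) := by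
      have h := (intervalIntegral.intervalIntegrable_rpow' (a := 1/2) (b := -1)
        (show (-1:ℝ) < -(2⁻¹) by norm_num)).comp_sub_left 1
      rw [show ((1:ℝ) - 1/2 : ℝ) = 1/2 by norm_num, show ((1:ℝ) - -1 : ℝ) = 2 by norm_num,
        intervalIntegrable_iff_integrableOn_Ioc_of_le (by norm_num)] at h
      exact h
    have ic : IntegrableOn (fun _ : ℝ => Real.log 3) (Ioc (1/2:ℝ) 2) :=
      (integrableOn_const_iff).mpr (Or.inr (by simp))
    have base : IntegrableOn (fun s : ℝ =>
        (2:ℝ) ^ r * (Real.log 3 + (2 * (1 - s) ^ (-(2⁻¹):ℝ) + 2 * (s - 1) ^ (-(2⁻¹):ℝ))))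
        (Ioc (1/2:ℝ) 2) :=
      ((ic.add ((i2.const_mul 2).add (i1.const_mul 2))).const_mul _)
    refine base.mono' hgmeas.aestronglyMeasurable ?_
    filter_upwards [ae_restrict_mem measurableSet_Ioc] with s hs
    obtain ⟨hs0, hs2⟩ := hs
    have hs0' : (0:ℝ) < s := by linarith
    have hsr : (0:ℝ) < s ^ r := Real.rpow_pos_of_pos hs0' r
    have hnum0 : 0 ≤ Real.log (1 + s) := Real.log_nonneg (by linarith)
    have key : |Real.log (|1 - s|)| ≤ 2 * (1 - s) ^ (-(2⁻¹):ℝ) + 2 * (s - 1) ^ (-(2⁻¹):ℝ) := by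
      rcases lt_trichotomy s 1 with h | h | h
      · have h1 : (0:ℝ) < 1 - s := by linarith
        have hzero : (s - 1 : ℝ) ^ (-(2⁻¹):ℝ) = 0 := by
          rw [Real.rpow_def_of_neg (by linarith), aux_half, mul_zero]
        rw [hzero, mul_zero, add_zero, _root_.abs_of_pos h1]
        exact aux_log_abs_bound h1 (by linarith)
      · rw [h]
        simp [Real.zero_rpow (show (-(2⁻¹):ℝ) ≠ 0 by norm_num)]
      · have h1 : (0:ℝ) < s - 1 := by linarith
        have hzero : (1 - s : ℝ) ^ (-(2⁻¹):ℝ) = 0 := by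
          rw [Real.rpow_def_of_neg (by linarith), aux_half, mul_zero]
        rw [hzero, mul_zero, zero_add, abs_of_neg (by linarith : (1 - s:ℝ) < 0),
          show (-(1 - s) : ℝ) = s - 1 by ring]
        exact aux_log_abs_bound h1 (by linarith)
    have hkey0 : (0:ℝ) ≤ 2 * (1 - s) ^ (-(2⁻¹):ℝ) + 2 * (s - 1) ^ (-(2⁻¹):ℝ) :=
      le_trans (abs_nonneg _) key
    have hden : ((2:ℝ) ^ r)⁻¹ ≤ s ^ r := by
      have h1 : ((2:ℝ)⁻¹) ^ r ≤ s ^ r :=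
        Real.rpow_le_rpow (by norm_num) (by linarith) hr0
      rwa [Real.inv_rpow (by norm_num)] at h1
    rw [Real.norm_eq_abs, hg, abs_div, _root_.abs_of_pos hsr,
      _root_.abs_of_nonneg (by positivity)]
    have h2r : (0:ℝ) < (2:ℝ) ^ r := Real.rpow_pos_of_pos (by norm_num) r
    calc (Real.log (1 + s) + |Real.log (|1 - s|)|) / s ^ r
        ≤ (Real.log (1 + s) + |Real.log (|1 - s|)|) / ((2:ℝ) ^ r)⁻¹ := by
          gcongr (Real.log (1 + s) + |Real.log (|1 - s|)|) / ?_
      _ = (2:ℝ) ^ r * (Real.log (1 + s) + |Real.log (|1 - s|)|) := by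
          rw [div_eq_mul_inv, inv_inv]; ring
      _ ≤ (2:ℝ) ^ r * (Real.log 3 + (2 * (1 - s) ^ (-(2⁻¹):ℝ) + 2 * (s - 1) ^ (-(2⁻¹):ℝ))) := by
          have hl3 : Real.log (1 + s) ≤ Real.log 3 := Real.log_le_log (by linarith) (by linarith)
          have h2rp : (0:ℝ) ≤ (2:ℝ) ^ r := h2r.le
          nlinarith [key, hl3]
  have hg3 : IntegrableOn g (Ioi (2:ℝ)) := by
    have base : IntegrableOn (fun s : ℝ => 16 * s ^ ((4:ℝ)⁻¹ - r)) (Ioi (2:ℝ)) :=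
      (integrableOn_Ioi_rpow_of_lt (by linarith) (by norm_num)).const_mul 16
    refine base.mono' hgmeas.aestronglyMeasurable ?_
    filter_upwards [ae_restrict_mem measurableSet_Ioi] with s hs
    rw [mem_Ioi] at hs
    have hs0 : (0:ℝ) < s := by linarith
    have hsr : (0:ℝ) < s ^ r := Real.rpow_pos_of_pos hs0 r
    have hnum0 : 0 ≤ Real.log (1 + s) := Real.log_nonneg (by linarith)
    have hb1 : Real.log (1 + s) ≤ 8 * s ^ ((4:ℝ)⁻¹) := by
      have h1 := Real.log_le_rpow_div (show (0:ℝ) ≤ 1 + s by linarith)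
        (show (0:ℝ) < 4⁻¹ by norm_num)
      have h2 : ((1:ℝ) + s) ^ ((4:ℝ)⁻¹) ≤ (2*s) ^ ((4:ℝ)⁻¹) :=
        Real.rpow_le_rpow (by linarith) (by linarith) (by norm_num)
      have h3 : ((2:ℝ)*s) ^ ((4:ℝ)⁻¹) = (2:ℝ) ^ ((4:ℝ)⁻¹) * s ^ ((4:ℝ)⁻¹) :=
        Real.mul_rpow (by norm_num) hs0.le
      have h4 : (2:ℝ) ^ ((4:ℝ)⁻¹) ≤ 2 := by
        calc (2:ℝ) ^ ((4:ℝ)⁻¹) ≤ (2:ℝ) ^ (1:ℝ) :=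
              Real.rpow_le_rpow_of_exponent_le (by norm_num) (by norm_num)
          _ = 2 := Real.rpow_one 2
      have h5 : (0:ℝ) ≤ s ^ ((4:ℝ)⁻¹) := (Real.rpow_pos_of_pos hs0 _).le
      have h6 : ((1:ℝ) + s) ^ ((4:ℝ)⁻¹) / 4⁻¹ = 4 * ((1:ℝ) + s) ^ ((4:ℝ)⁻¹) := by
        rw [div_eq_mul_inv, inv_inv]; ring
      rw [h6] at h1
      nlinarith
    have hb2 : |Real.log (|1 - s|)| ≤ Real.log (1 + s) := by
      rw [abs_of_neg (by linarith : (1 - s:ℝ) < 0), show (-(1 - s) : ℝ) = s - 1 by ring,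
        _root_.abs_of_nonneg (Real.log_nonneg (by linarith))]
      exact Real.log_le_log (by linarith) (by linarith)
    rw [Real.norm_eq_abs, hg, abs_div, _root_.abs_of_pos hsr,
      _root_.abs_of_nonneg (by positivity)]
    calc (Real.log (1 + s) + |Real.log (|1 - s|)|) / s ^ r
        ≤ (16 * s ^ ((4:ℝ)⁻¹)) / s ^ r := by
          gcongr
          nlinarith
      _ = 16 * s ^ ((4:ℝ)⁻¹ - r) := by
          rw [Real.rpow_sub hs0, mul_div_assoc]
  have hgint : IntegrableOn g (Ioi (0:ℝ)) := by
    have hu : Ioc (0:ℝ) (1/2) ∪ Ioc (1/2:ℝ) 2 ∪ Ioi (2:ℝ) = Ioi (0:ℝ) := by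
      rw [Ioc_union_Ioc_eq_Ioc (by norm_num) (by norm_num), Ioc_union_Ioi_eq_Ioi (by norm_num)]
    rw [← hu]
    exact (hg1.union hg2).union hg3
  refine hgint.mono' hfmeas.aestronglyMeasurable ?_
  have hne : ∀ᵐ s : ℝ ∂(volume.restrict (Ioi (0:ℝ))), s ≠ 1 := by
    refine Filter.Eventually.filter_mono (ae_mono Measure.restrict_le_self) ?_
    rw [ae_iff]
    simp only [not_not, setOf_eq_eq_singleton]
    exact measure_singleton 1
  filter_upwards [ae_restrict_mem measurableSet_Ioi, hne] with s hs hs1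
  rw [mem_Ioi] at hs
  obtain ⟨hlow, hup⟩ := aux_abs_bounds θ s hs.le
  have habs0 : (0:ℝ) < |1 - s| := abs_pos.mpr (by intro h; apply hs1; linarith)
  have hA0 : (0:ℝ) < ‖1 - (s:ℂ) * Complex.exp (-2 * θ * Complex.I)‖ :=
    lt_of_lt_of_le habs0 hlow
  have hsr : (0:ℝ) < s ^ r := Real.rpow_pos_of_pos hs r
  have h1s : (0:ℝ) ≤ Real.log (1 + s) := Real.log_nonneg (by linarith)
  have hub : Real.log ‖1 - (s:ℂ) * Complex.exp (-2 * θ * Complex.I)‖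
      ≤ Real.log (1 + s) := Real.log_le_log hA0 hup
  have hlb : Real.log (|1 - s|)
      ≤ Real.log ‖1 - (s:ℂ) * Complex.exp (-2 * θ * Complex.I)‖ :=
    Real.log_le_log habs0 hlow
  have hbound : |Real.log ‖1 - (s:ℂ) * Complex.exp (-2 * θ * Complex.I)‖|
      ≤ Real.log (1 + s) + |Real.log (|1 - s|)| := by
    rw [abs_le]
    constructor
    · have := neg_abs_le (Real.log (|1 - s|))
      linarith
    · have := abs_nonneg (Real.log (|1 - s|))
      linarith
  have hgs : g s = (Real.log (1 + s) + |Real.log (|1 - s|)|) / s ^ r := rfl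
  rw [Real.norm_eq_abs, abs_div, _root_.abs_of_pos hsr, hgs]
  gcongr


theorem integral_log_abs_one_sub_rot_weighted (p θ ρ ε : ℝ) (hp1 : 1 < p) (hp2 : p < 2)
    (hθ0 : 0 ≤ θ) (hθπ : θ ≤ π) (hρ : 0 < ρ) (hε : 0 < ε) :
    (∫ s in Set.Ioi (0:ℝ),
        (Real.log ‖1 - (s:ℂ) * Complex.exp (-2 * θ * Complex.I)‖
          / s ^ (p / 2 + 1)) * Real.exp (-ε * s * ρ ^ 2))
      ≤ Real.exp (-2 * ε * ρ ^ 2 * max (Real.cos (2 * θ)) 0) *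
        ∫ s in Set.Ioi (0:ℝ),
          Real.log ‖1 - (s:ℂ) * Complex.exp (-2 * θ * Complex.I)‖
            / s ^ (p / 2 + 1) := by
  have hr1 : (3:ℝ)/2 < p / 2 + 1 := by linarith
  have hr2 : p / 2 + 1 < 2 := by linarith
  have hr0 : (0:ℝ) ≤ p / 2 + 1 := by linarith
  set f : ℝ → ℝ := fun s =>
    Real.log ‖1 - (s:ℂ) * Complex.exp (-2 * θ * Complex.I)‖ / s ^ (p / 2 + 1)
    with hfdef
  set C : ℝ := Real.exp (-2 * ε * ρ ^ 2 * max (Real.cos (2 * θ)) 0) with hCdef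
  have hint : IntegrableOn f (Set.Ioi (0:ℝ)) := aux_integrable (p / 2 + 1) θ hr1 hr2
  have hfmeas : Measurable f := by
    apply Measurable.div
    · exact Real.measurable_log.comp (continuous_norm.comp
        (continuous_const.sub (Complex.continuous_ofReal.mul continuous_const))).measurable
    · exact (Real.continuous_rpow_const hr0).measurable
  have hwint : IntegrableOn (fun s => f s * Real.exp (-ε * s * ρ ^ 2)) (Set.Ioi (0:ℝ)) := by
    refine (hint.abs).mono' ?_ ?_
    · exact (hfmeas.mul ((Real.continuous_exp.comp (by continuity)).measurable)
        ).aestronglyMeasurable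
    · filter_upwards [ae_restrict_mem measurableSet_Ioi] with s hs
      rw [mem_Ioi] at hs
      have hle1 : Real.exp (-ε * s * ρ ^ 2) ≤ 1 := by
        rw [← Real.exp_zero]
        refine Real.exp_le_exp.mpr ?_
        have := mul_pos (mul_pos hε hs) (pow_pos hρ 2)
        nlinarith
      rw [Real.norm_eq_abs, abs_mul, _root_.abs_of_pos (Real.exp_pos _)]
      calc |f s| * Real.exp (-ε * s * ρ ^ 2) ≤ |f s| * 1 :=
            mul_le_mul_of_nonneg_left hle1 (abs_nonneg _)
        _ = |f s| := mul_one _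
  have hpt : ∀ s ∈ Set.Ioi (0:ℝ), f s * Real.exp (-ε * s * ρ ^ 2) ≤ C * f s := by
    intro s hs
    rw [mem_Ioi] at hs
    have hsq := aux_sq_abs θ s
    set A : ℝ := ‖1 - (s:ℂ) * Complex.exp (-2 * θ * Complex.I)‖ with hAdef
    have hA0 : (0:ℝ) ≤ A := norm_nonneg _
    have hsr : (0:ℝ) < s ^ (p / 2 + 1) := Real.rpow_pos_of_pos hs _
    have hmc0 : Real.cos (2 * θ) ≤ max (Real.cos (2 * θ)) 0 := le_max_left _ _
    rcases le_or_gt s (2 * max (Real.cos (2 * θ)) 0) with hcase | hcase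
    · have hm : (0:ℝ) < max (Real.cos (2 * θ)) 0 := by linarith
      have hc0 : (0:ℝ) < Real.cos (2 * θ) := by
        rcases le_or_gt (Real.cos (2 * θ)) 0 with h | h
        · rw [max_eq_right h] at hm; linarith
        · exact h
      have hs2c : s ≤ 2 * Real.cos (2 * θ) := by
        rwa [max_eq_left hc0.le] at hcase
      have hA1 : A ≤ 1 := by nlinarith [sq_nonneg (A - 1)]
      have hlog : Real.log A ≤ 0 := Real.log_nonpos hA0 hA1
      have hfs : f s ≤ 0 := div_nonpos_of_nonpos_of_nonneg hlog hsr.le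
      have hwC : C ≤ Real.exp (-ε * s * ρ ^ 2) := by
        rw [hCdef]
        refine Real.exp_le_exp.mpr ?_
        have h := mul_le_mul_of_nonneg_left hcase (mul_pos hε (pow_pos hρ 2)).le
        nlinarith [h]
      calc f s * Real.exp (-ε * s * ρ ^ 2) ≤ f s * C :=
            mul_le_mul_of_nonpos_left hwC hfs
        _ = C * f s := mul_comm _ _
    · have hs2c : 2 * Real.cos (2 * θ) ≤ s := by linarith
      have hAsq : (1:ℝ) ≤ A ^ 2 := by nlinarith
      have hA1 : (1:ℝ) ≤ A := by nlinarith
      have hlog : (0:ℝ) ≤ Real.log A := Real.log_nonneg hA1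
      have hfs : (0:ℝ) ≤ f s := div_nonneg hlog hsr.le
      have hwC : Real.exp (-ε * s * ρ ^ 2) ≤ C := by
        rw [hCdef]
        refine Real.exp_le_exp.mpr ?_
        have h := mul_le_mul_of_nonneg_left hcase.le (mul_pos hε (pow_pos hρ 2)).le
        nlinarith [h]
      calc f s * Real.exp (-ε * s * ρ ^ 2) ≤ f s * C :=
            mul_le_mul_of_nonneg_left hwC hfs
        _ = C * f s := mul_comm _ _
  calc (∫ s in Set.Ioi (0:ℝ), f s * Real.exp (-ε * s * ρ ^ 2))
      ≤ ∫ s in Set.Ioi (0:ℝ), C * f s :=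
        setIntegral_mono_on hwint (hint.const_mul C) measurableSet_Ioi hpt
    _ = C * ∫ s in Set.Ioi (0:ℝ), f s := by rw [integral_const_mul]
end

section
/- Let A be an n×n complex matrix with Hermitian parts G = (A+A*)/2 and H = (A-A*)/(2i), and let C_B(z) denote the Carleman-type determinant ∏_k (1 - z·μ_k(B))·e^{z·μ_k(B)} over the eigenvalues μ_k(B) of B. Then for all z ∈ ℂ with I - zG invertible, det(I + z²·(H·(I - zG)^{-1})²) = C_A(z)·C_{A*}(z) / C_G(z)². -/
open Matrix

/-- The Carleman-type determinant `C_B(z) = det(I - z B) · exp(z · tr B)`. -/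
noncomputable def carlemanDet {n : ℕ} (B : Matrix (Fin n) (Fin n) ℂ) (z : ℂ) : ℂ :=
  (1 - z • B).det * Complex.exp (z * B.trace)

theorem det_factorization_carleman (n : ℕ) (A : Matrix (Fin n) (Fin n) ℂ)
    (G H : Matrix (Fin n) (Fin n) ℂ)
    (hG : G = (2:ℂ)⁻¹ • (A + Aᴴ)) (hH : H = (2 * Complex.I)⁻¹ • (A - Aᴴ))
    (z : ℂ) (hz : IsUnit (1 - z • G).det) :
    (1 + (z ^ 2) • (H * (1 - z • G)⁻¹) ^ 2).det
      = carlemanDet A z * carlemanDet Aᴴ z / (carlemanDet G z) ^ 2 := by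
  set M : Matrix (Fin n) (Fin n) ℂ := 1 - z • G with hM
  have hMinv : M * M⁻¹ = 1 := mul_nonsing_inv M hz
  set c : ℂ := Complex.I * z with hc
  have hA : (1 : Matrix (Fin n) (Fin n) ℂ) - z • A = M - c • H := by
    rw [hM, hG, hH, hc]
    match_scalars <;>
      (try simp only [Complex.inv_I, mul_inv]; try ring_nf; try simp [Complex.I_sq]; try ring_nf)
  have hAh : (1 : Matrix (Fin n) (Fin n) ℂ) - z • Aᴴ = M + c • H := by
    rw [hM, hG, hH, hc]
    match_scalars <;>
      (try simp only [Complex.inv_I, mul_inv]; try ring_nf; try simp [Complex.I_sq]; try ring_nf)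
  have key : (1 : Matrix (Fin n) (Fin n) ℂ) + (z ^ 2) • (H * M⁻¹) ^ 2
      = ((M + c • H) * M⁻¹) * ((M - c • H) * M⁻¹) := by
    have h1 : (M + c • H) * M⁻¹ = 1 + c • (H * M⁻¹) := by
      rw [add_mul, hMinv, smul_mul_assoc]
    have h2 : (M - c • H) * M⁻¹ = 1 - c • (H * M⁻¹) := by
      rw [sub_mul, hMinv, smul_mul_assoc]
    rw [h1, h2]
    set X := H * M⁻¹ with hX
    have hfac : (1 + c • X) * (1 - c • X) = 1 - (c * c) • (X * X) := by
      simp only [mul_sub, add_mul, one_mul, mul_one, smul_mul_smul_comm]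
      abel
    have hcc : c * c = -(z ^ 2) := by
      rw [hc]; ring_nf; try simp [Complex.I_sq]; try ring_nf
    rw [hfac, hcc, neg_smul, sub_neg_eq_add, sq X]
  have hdM : M.det ≠ 0 := hz.ne_zero
  have hdetinv : M⁻¹.det = (M.det)⁻¹ := by
    rw [det_nonsing_inv, Ring.inverse_eq_inv']
  have htr : z * A.trace + z * Aᴴ.trace = z * G.trace + z * G.trace := by
    rw [hG]
    simp only [trace_smul, trace_add, smul_eq_mul]
    ring
  have hexp : Complex.exp (z * A.trace) * Complex.exp (z * Aᴴ.trace)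
      = Complex.exp (z * G.trace) * Complex.exp (z * G.trace) := by
    rw [← Complex.exp_add, ← Complex.exp_add, htr]
  have hexpne : Complex.exp (z * G.trace) ≠ 0 := Complex.exp_ne_zero _
  have hne : (M.det * Complex.exp (z * G.trace)) ^ 2 ≠ 0 :=
    pow_ne_zero _ (mul_ne_zero hdM hexpne)
  rw [key, det_mul, det_mul, det_mul, hdetinv]
  simp only [carlemanDet, hA, hAh, ← hM]
  rw [eq_div_iff hne]
  simp only [trace_conjTranspose] at hexp ⊢
  field_simp
  linear_combination (-((M + c • H).det * (M - c • H).det)) * hexp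
end

section
/- For z = r·e^{iθ} with 0 < θ < π, R = 2r, and t ∈ (-R, R) with t ≠ 0, the boundary-segment kernel K₂(t, z) = (Im z/π)·(1/|t - z|² - R²/|R² - t z|²) satisfies K₂(t, re^{iθ}) ≤ (48 r/(π sin θ))·(1/t² - 1/R²). -/
open Real

theorem halfdisk_segment_kernel_bound (r θ t : ℝ) (hr : 0 < r)
    (hθ : θ ∈ Set.Ioo 0 π) (ht : t ∈ Set.Ioo (-(2 * r)) (2 * r)) (ht0 : t ≠ 0) :
    ((r * Complex.exp (θ * Complex.I)).im / π) *
        (1 / ‖(t : ℂ) - r * Complex.exp (θ * Complex.I)‖ ^ 2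
          - (2 * r) ^ 2 / ‖((2 * r : ℝ) ^ 2 : ℂ)
              - t * (r * Complex.exp (θ * Complex.I))‖ ^ 2)
      ≤ 48 * r / (π * Real.sin θ) * (1 / t ^ 2 - 1 / (2 * r) ^ 2) := by
  obtain ⟨hθ0, hθπ⟩ := hθ
  obtain ⟨ht1, ht2⟩ := ht
  have hs : 0 < Real.sin θ := Real.sin_pos_of_pos_of_lt_pi hθ0 hθπ
  have hπ : 0 < π := Real.pi_pos
  have hsc : Real.sin θ ^ 2 + Real.cos θ ^ 2 = 1 := Real.sin_sq_add_cos_sq θ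
  have him : ((r:ℂ) * Complex.exp ((θ:ℂ) * Complex.I)).im = r * Real.sin θ := by
    simp [Complex.exp_ofReal_mul_I_re, Complex.exp_ofReal_mul_I_im]
  have hA : ‖(t : ℂ) - r * Complex.exp (θ * Complex.I)‖ ^ 2
      = (t - r * Real.cos θ)^2 + (r * Real.sin θ)^2 := by
    rw [Complex.sq_norm, Complex.normSq_apply]
    simp [Complex.exp_ofReal_mul_I_re, Complex.exp_ofReal_mul_I_im, pow_two]
  have hB : ‖((2 * r : ℝ) ^ 2 : ℂ) - t * (r * Complex.exp (θ * Complex.I))‖ ^ 2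
      = ((2*r)^2 - t * (r * Real.cos θ))^2 + (t * (r * Real.sin θ))^2 := by
    rw [Complex.sq_norm, Complex.normSq_apply]
    simp [Complex.exp_ofReal_mul_I_re, Complex.exp_ofReal_mul_I_im, pow_two]
  rw [him, hA, hB]
  set s := Real.sin θ with hsdef
  set c := Real.cos θ with hcdef
  set A := (t - r*c)^2 + (r*s)^2 with hAdef
  set B := ((2*r)^2 - t*(r*c))^2 + (t*(r*s))^2 with hBdef
  clear him hA hB
  have hid : B - (2*r)^2 * A = 3*r^2*((2*r)^2 - t^2) := by
    rw [hAdef, hBdef]; linear_combination (t^2*r^2 - 4*r^4) * hsc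
  have hc1 : c ≤ 1 := hcdef ▸ Real.cos_le_one θ
  have hc2 : -1 ≤ c := hcdef ▸ Real.neg_one_le_cos θ
  have hAlb : t^2 * s^2 ≤ A := by
    rw [hAdef]; nlinarith [sq_nonneg (t*c - r)]
  have hBlb : 4 * r^4 ≤ B := by
    rw [hBdef]
    have h1 : 2*r^2 ≤ (2*r)^2 - t*(r*c) := by
      nlinarith [mul_nonneg (mul_nonneg (by linarith : (0:ℝ) ≤ 2*r - t) hr.le)
          (by linarith : (0:ℝ) ≤ 1 + c),
        mul_nonneg (mul_nonneg (by linarith : (0:ℝ) ≤ 2*r + t) hr.le)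
          (by linarith : (0:ℝ) ≤ 1 - c)]
    nlinarith [sq_nonneg (t*(r*s))]
  clear_value s c A B
  clear hsdef hcdef hAdef hBdef
  have ht2' : (0:ℝ) < t^2 := by positivity
  have hApos : 0 < A := lt_of_lt_of_le (by positivity) hAlb
  have hBpos : 0 < B := lt_of_lt_of_le (by positivity) hBlb
  have hD : 0 < (2*r)^2 - t^2 := by
    have h := mul_pos (show (0:ℝ) < 2*r - t by linarith) (show (0:ℝ) < 2*r + t by linarith)
    nlinarith [h]
  have hAB : t^2*s^2*(4*r^4) ≤ A*B :=
    mul_le_mul hAlb hBlb (by positivity) hApos.le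
  have hfrac : 1/A - (2*r)^2/B = (3*r^2*((2*r)^2 - t^2))/(A*B) := by
    rw [div_sub_div _ _ hApos.ne' hBpos.ne', one_mul]
    congr 1
    linarith [hid]
  have hfrac2 : 1/t^2 - 1/(2*r)^2 = ((2*r)^2 - t^2)/(t^2*(2*r)^2) := by
    rw [div_sub_div _ _ ht2'.ne' (by positivity : ((2*r)^2:ℝ) ≠ 0), one_mul, mul_one]
  rw [hfrac, hfrac2, div_mul_div_comm, div_mul_div_comm,
    div_le_div_iff₀ (mul_pos hπ (mul_pos hApos hBpos))
      (mul_pos (mul_pos hπ hs) (mul_pos ht2' (by positivity : (0:ℝ) < (2*r)^2)))]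
  have hAB' : t^2*(s^2*(r^4/4)) ≤ A*B := by
    nlinarith [hAB, mul_nonneg (mul_nonneg (sq_nonneg t) (sq_nonneg s))
      (pow_nonneg hr.le 4)]
  calc r*s*(3*r^2*((2*r)^2 - t^2)) * (π*s*(t^2*(2*r)^2))
      = (48*r*((2*r)^2-t^2))*(π*(t^2*(s^2*(r^4/4)))) := by ring
    _ ≤ (48*r*((2*r)^2-t^2))*(π*(A*B)) := by
        apply mul_le_mul_of_nonneg_left _ (mul_nonneg (by positivity) hD.le)
        exact mul_le_mul_of_nonneg_left hAB' hπ.le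
end
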